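/- Let T be a phylogenetic tree with leaf set N. Then every subset A ⊆ N occurs as a part of the partition induced by at most one non-leaf vertex of T. -/

import Mathlib

/-- A phylogenetic tree with leaf set `N`: a tree without degree-2 vertices whose
leaves (degree-1 vertices) are exactly the elements of `N`. -/
def IsPhyloTree {V : Type*} (G : SimpleGraph V) (N : Set V) : Prop :=
  G.IsTree ∧ (∀ v : V, (G.neighborSet v).ncard ≠ 2) ∧
    ∀ v : V, v ∈ N ↔ (G.neighborSet v).ncard = 1

/-- `partSet G N v e` is the set of leaves `i ∈ N` such that the (unique) path
from `v` to `i` begins with the edge `e`. -/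
def partSet {V : Type*} (G : SimpleGraph V) (N : Set V) (v : V) (e : Sym2 V) : Set V :=
  {i | i ∈ N ∧ ∃ p : G.Path v i, p.1.edges.head? = some e}

namespace PhyloAux

open SimpleGraph Walk

variable {V : Type*} [DecidableEq V] {G : SimpleGraph V}

/-- Splitting a walk at a support vertex bounds the sum of distances. -/
lemma dist_add_dist_le {s t u : V} (p : G.Walk s t) (hu : u ∈ p.support) :
    G.dist s u + G.dist u t ≤ p.length := by
  have h := congrArg Walk.length (p.take_spec hu)
  rw [Walk.length_append] at h
  calc G.dist s u + G.dist u t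
      ≤ (p.takeUntil u hu).length + (p.dropUntil u hu).length :=
        Nat.add_le_add (SimpleGraph.dist_le _) (SimpleGraph.dist_le _)
    _ = p.length := h

/-- In a tree, every path realizes the distance. -/
lemma path_length_eq_dist (hc : G.Connected) (ha : G.IsAcyclic) {a b : V}
    (p : G.Walk a b) (hp : p.IsPath) : p.length = G.dist a b := by
  obtain ⟨q, hq⟩ := hc.exists_walk_length_eq_dist a b
  have huniq : (⟨p, hp⟩ : G.Path a b) = q.toPath :=
    isAcyclic_iff_path_unique.mp ha _ _
  have hlen : p.length = q.bypass.length := by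
    have := congrArg (fun r : G.Path a b => r.1.length) huniq
    simpa [Walk.toPath] using this
  refine le_antisymm ?_ (SimpleGraph.dist_le p)
  rw [hlen, ← hq]
  exact q.length_bypass_le

/-- Get a path (as a walk that is a path) between any two vertices. -/
lemma exists_path (hc : G.Connected) (a b : V) :
    ∃ p : G.Walk a b, p.IsPath := by
  obtain ⟨q, _⟩ := hc.exists_walk_length_eq_dist a b
  exact ⟨q.bypass, q.bypass_isPath⟩

/-- D2: membership of the "side" via first edge of a path, in distance terms. -/
lemma side_iff (hc : G.Connected) (ha : G.IsAcyclic) {v u : V} (hadj : G.Adj v u) (i : V) :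
    (∃ p : G.Path v i, p.1.edges.head? = some s(v, u)) ↔ G.dist u i + 1 = G.dist v i := by
  constructor
  · rintro ⟨⟨p, hp⟩, hhead⟩
    cases p with
    | nil => simp [Walk.edges_nil] at hhead
    | @cons _ x _ h q =>
      rw [Walk.edges_cons, List.head?_cons, Option.some_inj] at hhead
      have hx : x = u := by
        rcases Sym2.eq_iff.mp hhead with ⟨_, h2⟩ | ⟨h1, h2⟩
        · exact h2
        · exact absurd h2.symm h.ne
      subst hx
      have h1 : q.length = G.dist x i := path_length_eq_dist hc ha q hp.of_cons
      have h2 : (Walk.cons h q).length = G.dist v i := path_length_eq_dist hc ha _ hp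
      rw [Walk.length_cons] at h2
      omega
  · intro hd
    obtain ⟨q0, hq0⟩ := hc.exists_walk_length_eq_dist u i
    set q := q0.bypass with hqdef
    have hqp : q.IsPath := q0.bypass_isPath
    have hqlen : q.length = G.dist u i := path_length_eq_dist hc ha q hqp
    have hvs : v ∉ q.support := by
      intro hmem
      have h1 := dist_add_dist_le q hmem
      rw [hqlen] at h1
      have h2 : G.dist u v = 1 := SimpleGraph.dist_eq_one_iff_adj.mpr hadj.symm
      omega
    refine ⟨⟨Walk.cons hadj q, hqp.cons hvs⟩, ?_⟩
    simp [Walk.edges_cons]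

/-- D3: dichotomy: every vertex is on one side or the other of an edge. -/
lemma dichotomy (hc : G.Connected) (ha : G.IsAcyclic) {v u : V} (hadj : G.Adj v u) (i : V) :
    G.dist u i + 1 = G.dist v i ∨ G.dist v i + 1 = G.dist u i := by
  obtain ⟨p, hp⟩ := exists_path hc v i
  have hplen : p.length = G.dist v i := path_length_eq_dist hc ha p hp
  by_cases hu : u ∈ p.support
  · left
    have h1 := dist_add_dist_le p hu
    have h2 : G.dist v u = 1 := SimpleGraph.dist_eq_one_iff_adj.mpr hadj
    have h3 : G.dist v i ≤ G.dist v u + G.dist u i := hc.dist_triangle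
    omega
  · right
    have h4 : (Walk.cons hadj.symm p).length = G.dist u i :=
      path_length_eq_dist hc ha _ (hp.cons hu)
    rw [Walk.length_cons, hplen] at h4
    omega

/-- D9: at a vertex, the direction towards a given target is unique. -/
lemma direction_unique (hc : G.Connected) (ha : G.IsAcyclic) {v c c' j : V}
    (h1 : G.Adj v c) (h2 : G.Adj v c')
    (hd1 : G.dist c j + 1 = G.dist v j) (hd2 : G.dist c' j + 1 = G.dist v j) : c = c' := by
  obtain ⟨p1, hp1⟩ := (side_iff hc ha h1 j).mpr hd1
  obtain ⟨p2, hp2⟩ := (side_iff hc ha h2 j).mpr hd2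
  have huniq : p1 = p2 := isAcyclic_iff_path_unique.mp ha _ _
  rw [huniq, hp2, Option.some_inj] at hp1
  rcases Sym2.eq_iff.mp hp1 with ⟨_, h⟩ | ⟨h, h'⟩
  · exact h.symm
  · exact absurd h'.symm h2.ne

/-- D8: direction from `v` towards `w ≠ v`. -/
lemma exists_direction (hc : G.Connected) (ha : G.IsAcyclic) {v w : V} (hne : v ≠ w) :
    ∃ a, G.Adj v a ∧ G.dist a w + 1 = G.dist v w := by
  obtain ⟨p, hp⟩ := exists_path hc v w
  have hplen : p.length = G.dist v w := path_length_eq_dist hc ha p hp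
  cases p with
  | nil => exact absurd rfl hne
  | @cons _ a _ h q =>
    refine ⟨a, h, ?_⟩
    have h1 : q.length = G.dist a w := path_length_eq_dist hc ha q hp.of_cons
    rw [Walk.length_cons] at hplen
    omega

/-- D6: sides are preserved along edges different from the separating edge. -/
lemma side_step (hc : G.Connected) (ha : G.IsAcyclic) {v v' x x' : V}
    (hvv' : G.Adj v v') (hxx' : G.Adj x x') (hne : s(x, x') ≠ s(v, v'))
    (hx : G.dist v' x + 1 = G.dist v x) : G.dist v' x' + 1 = G.dist v x' := by
  rcases dichotomy hc ha hvv' x' with hgoal | hbad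
  · exact hgoal
  exfalso
  have hxx1 : G.dist x x' = 1 := SimpleGraph.dist_eq_one_iff_adj.mpr hxx'
  have hvv1 : G.dist v v' = 1 := SimpleGraph.dist_eq_one_iff_adj.mpr hvv'
  have t1 : G.dist v x' ≤ G.dist v x + G.dist x x' := hc.dist_triangle
  have t2 : G.dist v x ≤ G.dist v x' + G.dist x' x := hc.dist_triangle
  have t3 : G.dist v' x' ≤ G.dist v' x + G.dist x x' := hc.dist_triangle
  have t2' : G.dist x' x = 1 := SimpleGraph.dist_eq_one_iff_adj.mpr hxx'.symm
  -- conclude exact values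
  have hvx' : G.dist v x' = G.dist v' x := by omega
  have hv'x' : G.dist v' x' = G.dist v' x + 1 := by omega
  -- path from v' to x
  obtain ⟨p, hp⟩ := exists_path hc v' x
  have hplen : p.length = G.dist v' x := path_length_eq_dist hc ha p hp
  -- path from v to x'
  obtain ⟨q, hq⟩ := exists_path hc v x'
  have hqlen : q.length = G.dist v x' := path_length_eq_dist hc ha q hq
  -- x' not in p's support
  have hx'p : x' ∉ p.support := by
    intro hmem
    have := dist_add_dist_le p hmem
    have h5 : G.dist x' x = 1 := SimpleGraph.dist_eq_one_iff_adj.mpr hxx'.symm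
    omega
  -- v' not in q's support
  have hv'q : v' ∉ q.support := by
    intro hmem
    have := dist_add_dist_le q hmem
    have h5 : G.dist v v' = 1 := hvv1
    omega
  -- two paths from v' to x'
  have hx'pr : x' ∉ p.reverse.support := by
    rwa [Walk.support_reverse, List.mem_reverse]
  set P1 : G.Walk v' x' := (Walk.cons hxx'.symm p.reverse).reverse with hP1def
  have hP1 : P1.IsPath := by
    rw [Walk.isPath_reverse_iff]
    exact ((p.isPath_reverse_iff).mpr hp).cons hx'pr
  set P2 : G.Walk v' x' := Walk.cons hvv'.symm q with hP2def
  have hP2 : P2.IsPath := hq.cons hv'q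
  have heq : P1 = P2 := by
    have := isAcyclic_iff_path_unique.mp ha (⟨P1, hP1⟩ : G.Path v' x') ⟨P2, hP2⟩
    exact congrArg Subtype.val this
  have hmemP2 : s(v', v) ∈ P2.edges := by
    rw [hP2def, Walk.edges_cons]; exact List.mem_cons_self
  rw [← heq] at hmemP2
  have hmemP1 : s(v', v) ∈ p.edges := by
    rw [hP1def, Walk.edges_reverse, List.mem_reverse, Walk.edges_cons] at hmemP2
    rcases List.mem_cons.mp hmemP2 with h | h
    · exfalso
      apply hne
      rw [Sym2.eq_swap (a := x) (b := x'), Sym2.eq_swap (a := v) (b := v')]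
      exact h.symm
    · rwa [Walk.edges_reverse, List.mem_reverse] at h
  have hvmem : v ∈ p.support := p.snd_mem_support_of_mem_edges hmemP1
  have := dist_add_dist_le p hvmem
  have hc1 : G.dist v' v = 1 := SimpleGraph.dist_eq_one_iff_adj.mpr hvv'.symm
  omega

/-- D7: every walk from one side to the other crosses the edge. -/
lemma crossing (hc : G.Connected) (ha : G.IsAcyclic) {v v' : V} (hvv' : G.Adj v v') :
    ∀ {x y : V} (p : G.Walk x y), G.dist v' x + 1 = G.dist v x →
      G.dist v y + 1 = G.dist v' y → s(v, v') ∈ p.edges := by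
  intro x y p
  induction p with
  | nil => intro h1 h2; omega
  | @cons a b c hab q ih =>
    intro h1 h2
    by_cases hE : s(a, b) = s(v, v')
    · rw [Walk.edges_cons]; exact hE ▸ List.mem_cons_self (a := s(a, b)) (l := q.edges)
    · rw [Walk.edges_cons]
      exact List.mem_cons_of_mem _ (ih (side_step hc ha hvv' hab hE h1) h2)

/-- D5: gluing distances across an edge. -/
lemma glue (hc : G.Connected) (ha : G.IsAcyclic) {v v' x y : V} (hvv' : G.Adj v v')
    (hx : G.dist v x + 1 = G.dist v' x) (hy : G.dist v' y + 1 = G.dist v y) :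
    G.dist x y = G.dist x v + G.dist v y := by
  have hvv1 : G.dist v v' = 1 := SimpleGraph.dist_eq_one_iff_adj.mpr hvv'
  refine le_antisymm ?_ ?_
  · have t1 : G.dist x y ≤ G.dist x v + G.dist v y := hc.dist_triangle
    exact t1
  · obtain ⟨p, hp⟩ := hc.exists_walk_length_eq_dist x y
    have hmem : s(v', v) ∈ p.edges := crossing hc ha hvv'.symm p hx hy
    have hvmem : v ∈ p.support := p.snd_mem_support_of_mem_edges hmem
    have := dist_add_dist_le p hvmem
    omega

/-- D4: each direction from a vertex contains a leaf. -/
lemma exists_leaf [Finite V] (hc : G.Connected) (ha : G.IsAcyclic) {N : Set V}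
    (hleaf : ∀ z, z ∈ N ↔ (G.neighborSet z).ncard = 1)
    {v u : V} (hadj : G.Adj v u) : ∃ j ∈ N, G.dist u j + 1 = G.dist v j := by
  set S : Set V := {j | G.dist u j + 1 = G.dist v j} with hSdef
  have hSu : u ∈ S := by
    simp only [hSdef, Set.mem_setOf_eq, SimpleGraph.dist_self]
    exact (SimpleGraph.dist_eq_one_iff_adj.mpr hadj).symm
  obtain ⟨j, hjS, hmax⟩ := Set.exists_max_image S (G.dist v) (Set.toFinite S) ⟨u, hSu⟩
  have hjS' : G.dist u j + 1 = G.dist v j := hjS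
  refine ⟨j, ?_, hjS'⟩
  rw [hleaf]
  have hjv : j ≠ v := by
    intro hh; rw [hh, SimpleGraph.dist_self] at hjS'; omega
  obtain ⟨y, hy, hyd⟩ := exists_direction hc ha hjv
  by_contra hcard
  have hcard1 : 1 ≤ (G.neighborSet j).ncard :=
    Nat.one_le_iff_ne_zero.mpr ((Set.ncard_pos (Set.toFinite _)).mpr ⟨y, hy⟩).ne'
  have hcard2 : 1 < (G.neighborSet j).ncard := by omega
  obtain ⟨a, b, haS, hbS, hab⟩ := (Set.one_lt_ncard_iff (Set.toFinite _)).mp hcard2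
  have hx : ∃ x, G.Adj j x ∧ x ≠ y := by
    by_cases hay : a = y
    · exact ⟨b, hbS, fun hh => hab (hay ▸ hh ▸ rfl)⟩
    · exact ⟨a, haS, hay⟩
  obtain ⟨x, hjx, hxy⟩ := hx
  rcases dichotomy hc ha hjx v with hcase | hcase
  · exact hxy (direction_unique hc ha hjx hy hcase hyd)
  · -- x is farther from v, and still in S
    have hd1 : G.dist v x ≤ G.dist v j + 1 := by
      have := hc.dist_triangle (u := v) (v := j) (w := x)
      have hj1 : G.dist j x = 1 := SimpleGraph.dist_eq_one_iff_adj.mpr hjx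
      omega
    have hd1' : G.dist v x = G.dist v j + 1 := by
      have c1 : G.dist j v = G.dist v j := SimpleGraph.dist_comm
      have c2 : G.dist x v = G.dist v x := SimpleGraph.dist_comm
      omega
    have hd2 : G.dist u x ≤ G.dist u j + 1 := by
      have := hc.dist_triangle (u := u) (v := j) (w := x)
      have hj1 : G.dist j x = 1 := SimpleGraph.dist_eq_one_iff_adj.mpr hjx
      omega
    have hd3 : G.dist v x ≤ G.dist v u + G.dist u x := hc.dist_triangle
    have hvu1 : G.dist v u = 1 := SimpleGraph.dist_eq_one_iff_adj.mpr hadj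
    have hxS : x ∈ S := by
      simp only [hSdef, Set.mem_setOf_eq]; omega
    have := hmax x hxS
    omega

/-- The push lemma: if the `f`-side of `w` is contained (within `N`) in the `e`-side of
`v`, with `v ≠ w` and `v` a non-leaf, then `w'` lies strictly beyond `w` from `v`. -/
lemma push [Finite V] (hc : G.Connected) (ha : G.IsAcyclic) {N : Set V}
    (hleaf : ∀ z, z ∈ N ↔ (G.neighborSet z).ncard = 1)
    (hdeg2 : ∀ z : V, (G.neighborSet z).ncard ≠ 2)
    {v w v' w' : V} (hvw : v ≠ w) (hv : v ∉ N) (hw : w ∉ N)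
    (hvv' : G.Adj v v') (hww' : G.Adj w w')
    (hsub : ∀ j ∈ N, G.dist w' j + 1 = G.dist w j → G.dist v' j + 1 = G.dist v j) :
    w' ≠ v ∧ G.dist w' v = G.dist w v + 1 := by
  obtain ⟨a, hva, had⟩ := exists_direction hc ha hvw
  -- v has a third neighbor c
  have hdegv : 3 ≤ (G.neighborSet v).ncard := by
    have h1 : 1 ≤ (G.neighborSet v).ncard :=
      Nat.one_le_iff_ne_zero.mpr ((Set.ncard_pos (Set.toFinite _)).mpr ⟨v', hvv'⟩).ne'
    have h2 : (G.neighborSet v).ncard ≠ 1 := fun hh => hv ((hleaf v).mpr hh)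
    have h3 := hdeg2 v
    omega
  obtain ⟨c, hvc, hcv', hca⟩ : ∃ c, G.Adj v c ∧ c ≠ v' ∧ c ≠ a := by
    by_contra hcon
    push_neg at hcon
    have hsubset : G.neighborSet v ⊆ {v', a} := by
      intro z hz
      rcases eq_or_ne z v' with hh | hh
      · exact Or.inl hh
      · exact Or.inr (hcon z hz hh)
    have := Set.ncard_le_ncard hsubset (Set.toFinite _)
    have hle : ({v', a} : Set V).ncard ≤ 2 := by
      have := Set.ncard_insert_le v' ({a} : Set V)
      simpa using this
    omega
  obtain ⟨j, hjN, hjd⟩ := exists_leaf hc ha hleaf hvc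
  -- j is not on the v'-side of e
  have hjnotside : ¬ (G.dist v' j + 1 = G.dist v j) := fun hh =>
    hcv' (direction_unique hc ha hvc hvv' hjd hh)
  -- hence not on the w'-side of f
  have hjnotf : ¬ (G.dist w' j + 1 = G.dist w j) := fun hh => hjnotside (hsub j hjN hh)
  have hjw : G.dist w j + 1 = G.dist w' j := by
    rcases dichotomy hc ha hww' j with hh | hh
    · exact absurd hh hjnotf
    · exact hh
  -- w is on the v-side of the edge (v, c)
  have hwv : G.dist v w + 1 = G.dist c w := by
    rcases dichotomy hc ha hvc w with hh | hh
    · exact absurd (direction_unique hc ha hvc hva hh had) hca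
    · exact hh
  -- glue: dist w j = dist w v + dist v j
  have hglue1 : G.dist w j = G.dist w v + G.dist v j := glue hc ha hvc hwv hjd
  have hwvpos : 1 ≤ G.dist w v := hc.pos_dist_of_ne (Ne.symm hvw)
  have hw'v : w' ≠ v := by
    intro hh
    rw [hh] at hjw
    omega
  refine ⟨hw'v, ?_⟩
  rcases dichotomy hc ha hvc w' with hh | hh
  · -- w' on c-side: impossible
    exfalso
    have := glue hc ha hvc hwv hh
    have h1 : G.dist w w' = 1 := SimpleGraph.dist_eq_one_iff_adj.mpr hww'
    have h2 : G.dist v w' = 0 → v = w' := fun h0 => hc.dist_eq_zero_iff.mp h0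
    have h3 : G.dist v w' ≠ 0 := by
      intro h0
      exact hw'v (h2 h0).symm
    omega
  · -- w' on v-side
    have hglue2 : G.dist w' j = G.dist w' v + G.dist v j := glue hc ha hvc hh hjd
    omega

/-- Extract the other endpoint of an incident edge. -/
lemma incidence_other {v : V} {e : Sym2 V} (he : e ∈ G.incidenceSet v) :
    ∃ v', G.Adj v v' ∧ e = s(v, v') := by
  obtain ⟨heE, heV⟩ := he
  induction e with
  | _ x y =>
    have hadj : G.Adj x y := heE
    rcases Sym2.mem_iff.mp heV with hh | hh
    · exact ⟨y, hh ▸ hadj, by rw [hh]⟩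
    · exact ⟨x, hh ▸ hadj.symm, by rw [hh, Sym2.eq_swap]⟩

end PhyloAux

/-- every subset `A ⊆ N` occurs as a part of the partition induced by at
most one non-leaf vertex. -/
theorem stmt4 {V : Type*} [Fintype V] (G : SimpleGraph V) (N : Set V)
    (h : IsPhyloTree G N) (hN : 3 ≤ N.ncard) (v w : V) (hv : v ∉ N) (hw : w ∉ N)
    (e : Sym2 V) (he : e ∈ G.incidenceSet v) (f : Sym2 V) (hf : f ∈ G.incidenceSet w)
    (hpart : partSet G N v e = partSet G N w f) : v = w := by
  classical
  open PhyloAux in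
  obtain ⟨⟨hc, ha⟩, hdeg2, hleaf⟩ := h
  obtain ⟨v', hvv', hev⟩ := incidence_other he
  obtain ⟨w', hww', hfw⟩ := incidence_other hf
  subst hev; subst hfw
  -- translate the partition equality into distances
  have hset : ∀ i ∈ N, (G.dist v' i + 1 = G.dist v i ↔ G.dist w' i + 1 = G.dist w i) := by
    intro i hiN
    have h1 : i ∈ partSet G N v s(v, v') ↔ i ∈ N ∧ G.dist v' i + 1 = G.dist v i := by
      unfold partSet
      rw [Set.mem_setOf_eq, side_iff hc ha hvv' i]
    have h2 : i ∈ partSet G N w s(w, w') ↔ i ∈ N ∧ G.dist w' i + 1 = G.dist w i := by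
      unfold partSet
      rw [Set.mem_setOf_eq, side_iff hc ha hww' i]
    rw [hpart] at h1
    constructor
    · intro hh; exact (h2.mp (h1.mpr ⟨hiN, hh⟩)).2
    · intro hh; exact (h1.mp (h2.mpr ⟨hiN, hh⟩)).2
  by_contra hvw
  -- apply the push lemma in both directions
  obtain ⟨hw'v, hdw'⟩ := push hc ha hleaf hdeg2 hvw hv hw hvv' hww'
    (fun j hj hh => (hset j hj).mpr hh)
  obtain ⟨hv'w, hdv'⟩ := push hc ha hleaf hdeg2 (Ne.symm hvw) hw hv hww' hvv'
    (fun j hj hh => (hset j hj).mp hh)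
  -- a leaf on the v'-side of e
  obtain ⟨i, hiN, hid⟩ := exists_leaf hc ha hleaf hvv'
  have hif : G.dist w' i + 1 = G.dist w i := (hset i hiN).mp hid
  -- w is on the v-side of e
  have hwside : G.dist v w + 1 = G.dist v' w := by
    have := hdv'; omega
  have hglue1 : G.dist w i = G.dist w v + G.dist v i := glue hc ha hvv' hwside hid
  rcases dichotomy hc ha hvv' w' with hh | hh
  · -- w' on the v'-side: then w' = v, contradiction
    exfalso
    have := glue hc ha hvv' hwside hh
    have h1 : G.dist w w' = 1 := SimpleGraph.dist_eq_one_iff_adj.mpr hww'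
    have h2 : G.dist w v ≠ 0 := by
      intro h0
      exact hvw (hc.dist_eq_zero_iff.mp h0).symm
    have h3 : G.dist v w' ≠ 0 := by
      intro h0
      exact hw'v (hc.dist_eq_zero_iff.mp h0).symm
    omega
  · -- w' on the v-side
    have hglue2 : G.dist w' i = G.dist w' v + G.dist v i := glue hc ha hvv' hh hid
    omega
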